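/- Let H be a complex Hilbert space and let a ∈ B(H) with polar decomposition a = r|a| (r a partial isometry with r* r equal to the range projection of |a|). Suppose h₁, h₂ are continuous functions on σ(|a|) vanishing at 0 with h₁ · h₂ = 0. Then the operators r h₁(|a|) and r h₂(|a|) are orthogonal: (r h₁(|a|))(r h₂(|a|))* = 0 and (r h₂(|a|))*(r h₁(|a|)) = 0. -/

import Mathlib

variable {H : Type*} [NormedAddCommGroup H] [InnerProductSpace ℂ H] [CompleteSpace H]

open ContinuousLinearMap

lemma commute_cfcHom {A : Type*} [NormedRing A] [StarRing A] [CStarRing A]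
    [CompleteSpace A] [NormedAlgebra ℝ A] [StarModule ℝ A]
    [ContinuousFunctionalCalculus ℝ A (IsSelfAdjoint : A → Prop)]
    {m p : A} (hm : IsSelfAdjoint m) (h : Commute p m)
    (g : C(spectrum ℝ m, ℝ)) : Commute p (cfcHom hm g) := by
  induction g using ContinuousMap.induction_on_of_compact with
  | const r =>
    have : (ContinuousMap.const (spectrum ℝ m) r) =
        algebraMap ℝ C(spectrum ℝ m, ℝ) r := rfl
    rw [this, AlgHomClass.commutes]
    exact Algebra.commute_algebraMap_right r p
  | id => rw [cfcHom_id hm]; exact h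
  | star_id =>
    rw [show star (ContinuousMap.restrict (spectrum ℝ m) (ContinuousMap.id ℝ)) =
      ContinuousMap.restrict (spectrum ℝ m) (ContinuousMap.id ℝ) from star_trivial _,
      cfcHom_id hm]
    exact h
  | add f g hf hg => rw [map_add]; exact hf.add_right hg
  | mul f g hf hg => rw [map_mul]; exact hf.mul_right hg
  | frequently f hf =>
    have hclosed : IsClosed {g : C(spectrum ℝ m, ℝ) | Commute p (cfcHom hm g)} := by
      have : Continuous fun g : C(spectrum ℝ m, ℝ) => cfcHom hm g :=
        cfcHom_continuous hm
      exact isClosed_eq (by continuity) (by continuity)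
    exact hclosed.closure_subset (mem_closure_iff_frequently.mpr hf)

lemma commute_cfc' {A : Type*} [NormedRing A] [StarRing A] [CStarRing A]
    [CompleteSpace A] [NormedAlgebra ℝ A] [StarModule ℝ A]
    [ContinuousFunctionalCalculus ℝ A (IsSelfAdjoint : A → Prop)]
    {m p : A} (h : Commute p m) (f : ℝ → ℝ) : Commute p (cfc f m) := by
  refine cfc_cases (fun x => Commute p x) m f (by simp [Commute.zero_right]) ?_
  intro hf hm
  exact commute_cfcHom hm h _

theorem stmt14 (a r m : H →L[ℂ] H)
    -- `m = |a| = (a* a)^{1/2}`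
    (hm : m.IsPositive) (hm2 : m * m = star a * a)
    -- polar decomposition `a = r |a|` with `r* r |a| = |a|`
    (hr : r * star r * r = r) (ha : a = r * m) (hrr : star r * r * m = m)
    -- `h₁, h₂` continuous, vanishing at `0`, with `h₁ h₂ = 0` on `σ(|a|)`
    (h₁ h₂ : ℝ → ℝ) (hc₁ : Continuous h₁) (hc₂ : Continuous h₂)
    (h₁0 : h₁ 0 = 0) (h₂0 : h₂ 0 = 0)
    (horth : ∀ s ∈ spectrum ℝ m, h₁ s * h₂ s = 0) :
    (r * cfc h₁ m) * star (r * cfc h₂ m) = 0 ∧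
      star (r * cfc h₂ m) * (r * cfc h₁ m) = 0 := by
  have hmsa : IsSelfAdjoint m := hm.isSelfAdjoint
  have hsa₂ : IsSelfAdjoint (cfc h₂ m) := cfc_predicate h₂ m
  have hmul12 : cfc h₁ m * cfc h₂ m = 0 := by
    rw [← cfc_mul h₁ h₂ m, cfc_congr (g := fun _ => (0 : ℝ)) horth, cfc_const_zero]
  have hmul21 : cfc h₂ m * cfc h₁ m = 0 := by
    rw [← cfc_mul h₂ h₁ m, cfc_congr (g := fun _ => (0 : ℝ))
      (fun s hs => by rw [mul_comm]; exact horth s hs), cfc_const_zero]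
  have hstar : star (r * cfc h₂ m) = cfc h₂ m * star r := by
    rw [star_mul, hsa₂.star_eq]
  have hmp : m * (star r * r) = m := by
    have := congrArg star hrr
    simpa [star_mul, hmsa.star_eq, mul_assoc] using this
  have hcomm : Commute (star r * r) m := by
    rw [Commute, SemiconjBy, hrr, hmp]
  have hcomm₁ : Commute (star r * r) (cfc h₁ m) := commute_cfc' hcomm h₁
  constructor
  · calc (r * cfc h₁ m) * star (r * cfc h₂ m)
        = r * (cfc h₁ m * cfc h₂ m) * star r := by rw [hstar]; noncomm_ring
      _ = 0 := by rw [hmul12]; simp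
  · calc star (r * cfc h₂ m) * (r * cfc h₁ m)
        = cfc h₂ m * ((star r * r) * cfc h₁ m) := by rw [hstar]; noncomm_ring
      _ = cfc h₂ m * (cfc h₁ m * (star r * r)) := by rw [hcomm₁]
      _ = (cfc h₂ m * cfc h₁ m) * (star r * r) := by noncomm_ring
      _ = 0 := by rw [hmul21]; simp
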